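/- Let d ≥ 1, let s = (s_1,…,s_d) be a scaling of positive integers, let D ⊆ ℝ^d be open, let 𝓛 = Σ_{|γ|=m} a_γ ∂^γ be a constant-coefficient operator of anisotropic order m with complex coefficients, let γ' < 0, let R > 0 and w ∈ ℝ^d. Then for every germ U over D the identity [𝓛(S^R_w U)]_{G^{γ'}((S^R_w)^{-1}D)} = R^{γ'+m} [𝓛U]_{G^{γ'}(D)} holds as an equality in [0,∞]. -/

import Mathlib

open scoped BigOperators ENNReal
open MeasureTheory

noncomputable section

namespace GermSchauder

variable {d : ℕ}

/-- Anisotropic distance determined by the scaling `s`. -/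
def adist (s : Fin d → ℕ) (x y : Fin d → ℝ) : ℝ :=
  ∑ i, |x i - y i| ^ ((s i : ℝ)⁻¹)

/-- Anisotropic open ball of radius `R` around `x`. -/
def aball (s : Fin d → ℕ) (x : Fin d → ℝ) (R : ℝ) : Set (Fin d → ℝ) :=
  {y | adist s x y < R}

/-- `P` is a complex polynomial function on `ℝ^d` of anisotropic degree at most `k`. -/
def IsAnisoPoly (s : Fin d → ℕ) (k : ℝ) (P : (Fin d → ℝ) → ℂ) : Prop :=
  ∃ p : MvPolynomial (Fin d) ℂ,
    (∀ γ ∈ p.support, ((∑ i, s i * γ i : ℕ) : ℝ) ≤ k) ∧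
    ∀ z, P z = MvPolynomial.eval (fun j => (z j : ℂ)) p

/-- A germ over `D`: a family of functions continuous on `D`. -/
def IsGerm (D : Set (Fin d → ℝ)) (U : (Fin d → ℝ) → (Fin d → ℝ) → ℂ) : Prop :=
  ∀ x ∈ D, ContinuousOn (U x) D

/-- The `G^η(D)` norm of a germ, valued in `[0,∞]`. -/
def germNorm (s : Fin d → ℕ) (D : Set (Fin d → ℝ)) (η : ℝ)
    (U : (Fin d → ℝ) → (Fin d → ℝ) → ℂ) : ℝ≥0∞ :=
  ⨅ M : {M : ℝ // 0 < M ∧ ∀ x ∈ D, ∀ y ∈ D,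
      ‖U x y‖ ≤ M * adist s x y ^ η}, ENNReal.ofReal M.1

/-- The `G^{η,α}(D)` seminorm of a germ, valued in `[0,∞]`. -/
def germHA (s : Fin d → ℕ) (D : Set (Fin d → ℝ)) (η α : ℝ)
    (U : (Fin d → ℝ) → (Fin d → ℝ) → ℂ) : ℝ≥0∞ :=
  ⨅ M : {M : ℝ // 0 < M ∧ ∀ x ∈ D, ∀ y ∈ D, ∃ P : (Fin d → ℝ) → ℂ,
      IsAnisoPoly s (⌊η⌋ : ℝ) P ∧ ∀ z ∈ D,
      ‖U x z - U y z - P z‖ ≤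
        M * adist s y z ^ α * (adist s x y + adist s y z) ^ (η - α)}, ENNReal.ofReal M.1

/-- The anisotropic rescaling/recentering map `S^R_w`. -/
def smap (s : Fin d → ℕ) (R : ℝ) (w : Fin d → ℝ) (y : Fin d → ℝ) : Fin d → ℝ :=
  fun i => w i + R ^ (s i) * y i

/-- The action of `S^R_w` on germs. -/
def sgerm (s : Fin d → ℕ) (R : ℝ) (w : Fin d → ℝ)
    (U : (Fin d → ℝ) → (Fin d → ℝ) → ℂ) : (Fin d → ℝ) → (Fin d → ℝ) → ℂ :=
  fun x y => U (smap s R w x) (smap s R w y)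

/-- First order partial derivative in direction `j`. -/
def pderiv1 (j : Fin d) (φ : (Fin d → ℝ) → ℝ) : (Fin d → ℝ) → ℝ :=
  fun x => fderiv ℝ φ x (Pi.single j 1)

/-- Multi-index partial derivative `∂^β`. -/
def pderivM (β : Fin d → ℕ) (φ : (Fin d → ℝ) → ℝ) : (Fin d → ℝ) → ℝ :=
  (List.finRange d).foldr (fun j ψ => (pderiv1 j)^[β j] ψ) φ

/-- The class `ℬ_k` of test functions: `C^k`, supported in the unit anisotropic
ball, with all partial derivatives of anisotropic degree at most `k` bounded by one. -/
structure TestB (s : Fin d → ℕ) (k : ℕ) where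
  toFun : (Fin d → ℝ) → ℝ
  contDiff : ContDiff ℝ k toFun
  support_subset : Function.support toFun ⊆ aball s 0 1
  deriv_le : ∀ β : Fin d → ℕ, (∑ i, s i * β i) ≤ k → ∀ y, |pderivM β toFun y| ≤ 1

/-- The rescaled and recentered test function `φ_x^λ`. -/
def tscale (s : Fin d → ℕ) (φ : (Fin d → ℝ) → ℝ) (x : Fin d → ℝ) (lam : ℝ) :
    (Fin d → ℝ) → ℝ :=
  fun y => (lam ^ (∑ i, s i))⁻¹ * φ (fun i => (lam ^ s i)⁻¹ * (y i - x i))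

/-- Multi-indices of anisotropic degree exactly `m`. -/
def midxEq (s : Fin d → ℕ) (m : ℕ) : Finset (Fin d → ℕ) :=
  (Fintype.piFinset fun _ => Finset.range (m + 1)).filter fun γ => ∑ i, s i * γ i = m

/-- Multi-indices of anisotropic degree at most `η`. -/
def midxLe (s : Fin d → ℕ) (η : ℝ) : Finset (Fin d → ℕ) :=
  (Fintype.piFinset fun _ => Finset.range (⌊η⌋₊ + 1)).filter
    fun γ => ((∑ i, s i * γ i : ℕ) : ℝ) ≤ η

/-- The formal adjoint `𝓛*ψ` of `𝓛 = Σ_{|γ|=m} a_γ ∂^γ` applied to a real test function. -/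
def Lstar (s : Fin d → ℕ) (m : ℕ) (a : (Fin d → ℕ) → ℂ) (ψ : (Fin d → ℝ) → ℝ) :
    (Fin d → ℝ) → ℂ :=
  fun y => ∑ γ ∈ midxEq s m, ((-1 : ℂ) ^ (∑ i, γ i)) * a γ * (pderivM γ ψ y : ℂ)

/-- The distributional pairing `⟨𝓛f, ψ⟩ := ∫_D f ⋅ 𝓛*ψ`. -/
def Lpair (s : Fin d → ℕ) (m : ℕ) (a : (Fin d → ℕ) → ℂ) (D : Set (Fin d → ℝ))
    (f : (Fin d → ℝ) → ℂ) (ψ : (Fin d → ℝ) → ℝ) : ℂ :=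
  ∫ y in D, f y * Lstar s m a ψ y

/-- The negative Hölder norm of `𝓛f` on `A ⊆ D` (pairing integrals taken over `D`),
with exponent `β < 0`, i.e. the sup of `λ^{-β} |⟨𝓛f, φ_y^λ⟩|` over `φ ∈ ℬ_{⌈-β⌉}`,
`y ∈ A` and `λ > 0` with `B_λ(y) ⊆ A`. -/
def LnegOn (s : Fin d → ℕ) (m : ℕ) (a : (Fin d → ℕ) → ℂ) (D A : Set (Fin d → ℝ))
    (β : ℝ) (f : (Fin d → ℝ) → ℂ) : ℝ≥0∞ :=
  ⨆ φ : TestB s ⌈-β⌉₊, ⨆ y : A, ⨆ lam : {l : ℝ // 0 < l ∧ aball s y.1 l ⊆ A},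
    ENNReal.ofReal (lam.1 ^ (-β) *
      ‖Lpair s m a D f (tscale s φ.toFun y.1 lam.1)‖)

/-- The `G^{γ'}(D)` seminorm of the distributional germ `𝓛U`, for `γ' < 0`. -/
def LnegSemi (s : Fin d → ℕ) (m : ℕ) (a : (Fin d → ℕ) → ℂ) (D : Set (Fin d → ℝ))
    (γ' : ℝ) (U : (Fin d → ℝ) → (Fin d → ℝ) → ℂ) : ℝ≥0∞ :=
  ⨆ φ : TestB s ⌈-γ'⌉₊, ⨆ x : D, ⨆ lam : {l : ℝ // 0 < l ∧ aball s x.1 l ⊆ D},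
    ENNReal.ofReal (lam.1 ^ (-γ') *
      ‖Lpair s m a D (U x.1) (tscale s φ.toFun x.1 lam.1)‖)

/-- Ellipticity: the symbol `Σ_{|γ|=m} a_γ (iξ)^γ` does not vanish for `ξ ≠ 0`. -/
def IsElliptic (s : Fin d → ℕ) (m : ℕ) (a : (Fin d → ℕ) → ℂ) : Prop :=
  ∀ ξ : Fin d → ℝ, ξ ≠ 0 →
    (∑ γ ∈ midxEq s m, a γ * ∏ j, (Complex.I * (ξ j : ℂ)) ^ γ j) ≠ 0

open Classical in
/-- Coefficients of the Laplacian `Δ = Σ_j ∂_j^2`. -/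
def laplCoeff : (Fin d → ℕ) → ℂ :=
  fun γ => if ∃ j : Fin d, γ = Pi.single j 2 then 1 else 0

/-- Classical Hölder seminorm of a function on the set `A`, valued in `[0,∞]`. -/
def holderSemi (s : Fin d → ℕ) (A : Set (Fin d → ℝ)) (α : ℝ)
    (f : (Fin d → ℝ) → ℂ) : ℝ≥0∞ :=
  ⨆ y : A, ⨆ z : A, ⨆ _ : y.1 ≠ z.1,
    ENNReal.ofReal (‖f y.1 - f z.1‖ / adist s y.1 z.1 ^ α)

/-- Polynomial-corrected Hölder seminorm of a function on the set `A`. -/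
def holderSemiP (s : Fin d → ℕ) (A : Set (Fin d → ℝ)) (α : ℝ)
    (f : (Fin d → ℝ) → ℂ) : ℝ≥0∞ :=
  ⨅ M : {M : ℝ // 0 < M ∧ ∀ y ∈ A, ∃ P : (Fin d → ℝ) → ℂ,
      IsAnisoPoly s (⌊α⌋ : ℝ) P ∧
      ∀ z ∈ A, ‖f z - P z‖ ≤ M * adist s z y ^ α}, ENNReal.ofReal M.1

/-! ### Parabolic setting -/

/-- The parabolic scaling on `ℝ^{1+d}`. -/
def spar (d : ℕ) : Fin (d + 1) → ℕ := Fin.cons 2 fun _ => 1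

/-- The adjoint heat operator `ψ ↦ -∂_t ψ - Δ_x ψ` (as a complex valued function). -/
def heatStar (d : ℕ) (ψ : (Fin (d + 1) → ℝ) → ℝ) : (Fin (d + 1) → ℝ) → ℂ :=
  fun y => ((- pderiv1 (0 : Fin (d + 1)) ψ y
    - ∑ j : Fin d, pderivM (Pi.single j.succ 2) ψ y : ℝ) : ℂ)

/-- Pairing `⟨(∂_t - Δ)f, ψ⟩ := ∫_D f ⋅ (-∂_t ψ - Δψ)`. -/
def heatPair (d : ℕ) (D : Set (Fin (d + 1) → ℝ)) (f : (Fin (d + 1) → ℝ) → ℂ)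
    (ψ : (Fin (d + 1) → ℝ) → ℝ) : ℂ :=
  ∫ y in D, f y * heatStar d ψ y

/-- The `G^{γ'}(D)` seminorm of `(∂_t - Δ)U` for `γ' < 0`. -/
def heatNegSemi (d : ℕ) (D : Set (Fin (d + 1) → ℝ)) (γ' : ℝ)
    (U : (Fin (d + 1) → ℝ) → (Fin (d + 1) → ℝ) → ℂ) : ℝ≥0∞ :=
  ⨆ φ : TestB (spar d) ⌈-γ'⌉₊, ⨆ x : D,
    ⨆ lam : {l : ℝ // 0 < l ∧ aball (spar d) x.1 l ⊆ D},
      ENNReal.ofReal (lam.1 ^ (-γ') *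
        ‖heatPair d D (U x.1) (tscale (spar d) φ.toFun x.1 lam.1)‖)

/-! ### Discrete setting -/

/-- The lattice point of `Λ_ε` indexed by `k ∈ ℤ^d`. -/
def latt (s : Fin d → ℕ) (ε : ℝ) (k : Fin d → ℤ) : Fin d → ℝ :=
  fun i => ε ^ (s i) * k i

/-- The lattice `Λ_ε = ε^{s_1}ℤ × ⋯ × ε^{s_d}ℤ` as a subset of `ℝ^d`. -/
def lattSet (s : Fin d → ℕ) (ε : ℝ) : Set (Fin d → ℝ) :=
  Set.range (latt s ε)

/-- Forward difference operator `D_{ε,j}`. -/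
def fdiff (s : Fin d → ℕ) (ε : ℝ) (j : Fin d) (u : (Fin d → ℝ) → ℂ) :
    (Fin d → ℝ) → ℂ :=
  fun k => (((ε ^ s j)⁻¹ : ℝ) : ℂ) * (u (k + (ε ^ s j) • (Pi.single j 1 : Fin d → ℝ)) - u k)

/-- Backward difference operator `D̄_{ε,j}`. -/
def bdiff (s : Fin d → ℕ) (ε : ℝ) (j : Fin d) (u : (Fin d → ℝ) → ℂ) :
    (Fin d → ℝ) → ℂ :=
  fun k => (((ε ^ s j)⁻¹ : ℝ) : ℂ) * (u k - u (k - (ε ^ s j) • (Pi.single j 1 : Fin d → ℝ)))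

/-- Iterated forward difference `D_ε^γ`. -/
def fdiffM (s : Fin d → ℕ) (ε : ℝ) (γ : Fin d → ℕ) (u : (Fin d → ℝ) → ℂ) :
    (Fin d → ℝ) → ℂ :=
  (List.finRange d).foldr (fun j v => (fdiff s ε j)^[γ j] v) u

/-- Iterated backward difference `D̄_ε^δ`. -/
def bdiffM (s : Fin d → ℕ) (ε : ℝ) (δ : Fin d → ℕ) (u : (Fin d → ℝ) → ℂ) :
    (Fin d → ℝ) → ℂ :=
  (List.finRange d).foldr (fun j v => (bdiff s ε j)^[δ j] v) u

/-- The discrete Laplacian `Δ_ε` (isotropic scaling). -/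
def discLap (ε : ℝ) (u : (Fin d → ℝ) → ℂ) : (Fin d → ℝ) → ℂ :=
  fun y => (((ε ^ 2)⁻¹ : ℝ) : ℂ) *
    ∑ j : Fin d, ((u (y + ε • (Pi.single j 1 : Fin d → ℝ)) - u y) + (u (y - ε • (Pi.single j 1 : Fin d → ℝ)) - u y))

/-- The discrete pairing `⟨f, g⟩_ε := ε^{s_1+⋯+s_d} Σ_{k ∈ Λ_ε} f(k) g(k)`. -/
def dpair (s : Fin d → ℕ) (ε : ℝ) (f : (Fin d → ℝ) → ℂ) (g : (Fin d → ℝ) → ℝ) : ℂ :=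
  ((ε ^ (∑ i, s i) : ℝ) : ℂ) * ∑' k : Fin d → ℤ, f (latt s ε k) * (g (latt s ε k) : ℂ)

/-- The discrete `G^{γ'}(Λ_ε)` seminorm of a germ `V` on `Λ_ε`, for `γ' < 0`. -/
def dnegSemi (s : Fin d → ℕ) (ε : ℝ) (γ' : ℝ)
    (V : (Fin d → ℝ) → (Fin d → ℝ) → ℂ) : ℝ≥0∞ :=
  ⨆ φ : TestB s ⌈-γ'⌉₊, ⨆ k : Fin d → ℤ, ⨆ lam : {l : ℝ // ε ≤ l},
    ENNReal.ofReal (lam.1 ^ (-γ') *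
      ‖dpair s ε (V (latt s ε k)) (tscale s φ.toFun (latt s ε k) lam.1)‖)

/-- Pairs of multi-indices with `|γ| + |δ| = m`. -/
def pairsEq (s : Fin d → ℕ) (m : ℕ) : Finset ((Fin d → ℕ) × (Fin d → ℕ)) :=
  ((Fintype.piFinset fun _ => Finset.range (m + 1)) ×ˢ
      (Fintype.piFinset fun _ => Finset.range (m + 1))).filter
    fun p => (∑ i, s i * p.1 i) + (∑ i, s i * p.2 i) = m

/-- The discrete difference operator `L_ε = Σ_{|γ|+|δ|=m} a_{γ,δ} D_ε^γ D̄_ε^δ`. -/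
def diffOpPair (s : Fin d → ℕ) (ε : ℝ) (m : ℕ)
    (a : (Fin d → ℕ) × (Fin d → ℕ) → ℂ) (u : (Fin d → ℝ) → ℂ) :
    (Fin d → ℝ) → ℂ :=
  fun y => ∑ p ∈ pairsEq s m, a p * fdiffM s ε p.1 (bdiffM s ε p.2 u) y

/-- The discrete symbol component `ξ^ε_{θ,j} = i ε^{-s_j} (1 - e^{i ε^{s_j} θ_j})`. -/
def xiSym (s : Fin d → ℕ) (ε : ℝ) (θ : Fin d → ℝ) (j : Fin d) : ℂ :=
  Complex.I * (((ε ^ s j)⁻¹ : ℝ) : ℂ) *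
    (1 - Complex.exp (Complex.I * ((ε ^ s j * θ j : ℝ) : ℂ)))

/-- The discrete symbol `L̂_ε(θ)`. -/
def Lhatε (s : Fin d → ℕ) (m : ℕ) (a : (Fin d → ℕ) × (Fin d → ℕ) → ℂ)
    (ε : ℝ) (θ : Fin d → ℝ) : ℂ :=
  ∑ p ∈ pairsEq s m, a p * (∏ j, (Complex.I * xiSym s ε θ j) ^ p.1 j) *
    (∏ j, (Complex.I * (starRingEnd ℂ) (xiSym s ε θ j)) ^ p.2 j)

/-- The continuous symbol `L̂(ξ) = Σ a_{γ,δ} (iξ)^{γ+δ}`. -/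
def LhatC (s : Fin d → ℕ) (m : ℕ) (a : (Fin d → ℕ) × (Fin d → ℕ) → ℂ)
    (ξ : Fin d → ℝ) : ℂ :=
  ∑ p ∈ pairsEq s m, a p * ∏ j, (Complex.I * (ξ j : ℂ)) ^ (p.1 j + p.2 j)

/-! ### Locally uniform seminorms -/

/-- The locally uniform supremum `‖U‖_{<R}`, valued in `[0,∞]`. -/
def germSup (s : Fin d → ℕ) (R : ℝ)
    (U : (Fin d → ℝ) → (Fin d → ℝ) → ℂ) : ℝ≥0∞ :=
  ⨆ p : {p : (Fin d → ℝ) × (Fin d → ℝ) // adist s p.1 p.2 < R},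
    ENNReal.ofReal (‖U p.1.1 p.1.2‖)

/-- The locally uniform seminorm `[U]_{G_R^η}`. -/
def germNormLoc (s : Fin d → ℕ) (R η : ℝ)
    (U : (Fin d → ℝ) → (Fin d → ℝ) → ℂ) : ℝ≥0∞ :=
  ⨆ p : {p : (Fin d → ℝ) × (Fin d → ℝ) // 0 < adist s p.1 p.2 ∧ adist s p.1 p.2 < R},
    ENNReal.ofReal (‖U p.1.1 p.1.2‖ / adist s p.1.1 p.1.2 ^ η)

/-- The locally uniform seminorm `[U]_{G_R^{η,α}}`. -/
def germHALoc (s : Fin d → ℕ) (R η α : ℝ)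
    (U : (Fin d → ℝ) → (Fin d → ℝ) → ℂ) : ℝ≥0∞ :=
  ⨆ p : {p : (Fin d → ℝ) × (Fin d → ℝ) // 0 < adist s p.1 p.2 ∧ adist s p.1 p.2 < R},
    ⨅ P : {P : (Fin d → ℝ) → ℂ // IsAnisoPoly s (⌊η⌋ : ℝ) P},
      ⨆ z : {z : Fin d → ℝ // 0 < adist s p.1.2 z ∧ adist s p.1.2 z < R},
        ENNReal.ofReal (‖U p.1.1 z.1 - U p.1.2 z.1 - P.1 z.1‖ /
          (adist s p.1.2 z.1 ^ α * (adist s p.1.1 p.1.2 + adist s p.1.2 z.1) ^ (η - α)))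

/-- The locally uniform seminorm `[𝓛U]_{G_R^β}` for `β < 0` (pairings over all of `ℝ^d`). -/
def LnegSemiLoc (s : Fin d → ℕ) (m : ℕ) (a : (Fin d → ℕ) → ℂ) (R β : ℝ)
    (U : (Fin d → ℝ) → (Fin d → ℝ) → ℂ) : ℝ≥0∞ :=
  ⨆ φ : TestB s ⌈-β⌉₊, ⨆ x : Fin d → ℝ, ⨆ lam : {l : ℝ // 0 < l ∧ l < R},
    ENNReal.ofReal (lam.1 ^ (-β) *
      ‖Lpair s m a Set.univ (U x) (tscale s φ.toFun x lam.1)‖)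


/-! ### Auxiliary lemmas for the scaling identity -/

section ScalingAux

def sclm (s : Fin d → ℕ) (R : ℝ) : (Fin d → ℝ) →L[ℝ] (Fin d → ℝ) :=
  LinearMap.toContinuousLinearMap (Matrix.toLin' (Matrix.diagonal fun i => R ^ s i))

lemma sclm_apply (s : Fin d → ℕ) (R : ℝ) (y : Fin d → ℝ) (i : Fin d) :
    sclm s R y i = R ^ s i * y i := by
  simp [sclm, Matrix.toLin'_apply, Matrix.mulVec_diagonal]

lemma sclm_det (s : Fin d → ℕ) (R : ℝ) :
    (sclm s R).det = R ^ (∑ i, s i) := by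
  rw [ContinuousLinearMap.det, sclm, LinearMap.coe_toContinuousLinearMap,
    LinearMap.det_toLin', Matrix.det_diagonal, Finset.prod_pow_eq_pow_sum]

lemma sclm_det_ne {s : Fin d → ℕ} {R : ℝ} (hR : 0 < R) : (sclm s R).det ≠ 0 := by
  rw [sclm_det]; positivity

lemma smap_apply_eq (s : Fin d → ℕ) (R : ℝ) (w y : Fin d → ℝ) :
    smap s R w y = w + sclm s R y := by
  funext i; simp [smap, sclm_apply]

def scle (s : Fin d → ℕ) {R : ℝ} (hR : 0 < R) : (Fin d → ℝ) ≃L[ℝ] (Fin d → ℝ) :=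
  (sclm s R).toContinuousLinearEquivOfDetNeZero (sclm_det_ne hR)

lemma scle_apply (s : Fin d → ℕ) {R : ℝ} (hR : 0 < R) (y : Fin d → ℝ) :
    scle s hR y = sclm s R y := rfl

lemma fderiv_comp_const_add' (f : (Fin d → ℝ) → ℝ) (c x : Fin d → ℝ) :
    fderiv ℝ (fun y => f (c + y)) x = fderiv ℝ f (c + x) := by
  by_cases h : DifferentiableAt ℝ f (c + x)
  · have h1 : HasFDerivAt (fun y : Fin d → ℝ => c + y)
      (ContinuousLinearMap.id ℝ (Fin d → ℝ)) x := (hasFDerivAt_id x).const_add c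
    have := (h.hasFDerivAt.comp x h1).fderiv
    simp only [ContinuousLinearMap.comp_id] at this; exact this
  · have h2 : ¬ DifferentiableAt ℝ (fun y => f (c + y)) x := by
      intro h'
      have h3 : DifferentiableAt ℝ (fun z : Fin d → ℝ => -c + z) (c + x) :=
        (differentiable_id.const_add (-c)) (c + x)
      have h4 : DifferentiableAt ℝ (fun y => f (c + y))
          ((fun z : Fin d → ℝ => -c + z) (c + x)) := by simpa using h'
      have h6 := h4.comp (c + x) h3
      have h5 : ((fun y => f (c + y)) ∘ (fun z : Fin d → ℝ => -c + z)) = f := by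
        funext z; simp
      rw [h5] at h6
      exact h h6
    rw [fderiv_zero_of_not_differentiableAt h, fderiv_zero_of_not_differentiableAt h2]

lemma sclm_single (s : Fin d → ℕ) (R : ℝ) (j : Fin d) :
    sclm s R (Pi.single j 1) = (R ^ s j : ℝ) • (Pi.single j 1 : Fin d → ℝ) := by
  funext i
  rcases eq_or_ne i j with h | h
  · subst h; simp [sclm_apply]
  · simp [sclm_apply, Pi.single_eq_of_ne h]

lemma pderiv1_comp_smap (s : Fin d → ℕ) {R : ℝ} (hR : 0 < R) (w : Fin d → ℝ)
    (f : (Fin d → ℝ) → ℝ) (j : Fin d) :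
    pderiv1 j (fun y => f (smap s R w y)) =
      fun y => R ^ s j * pderiv1 j f (smap s R w y) := by
  funext y
  have he : (fun y => f (smap s R w y)) = (fun z => f (w + z)) ∘ (scle s hR) := by
    funext z; simp [Function.comp, scle_apply, smap_apply_eq]
  rw [pderiv1, he, ContinuousLinearEquiv.comp_right_fderiv]
  simp only [ContinuousLinearMap.coe_comp', Function.comp_apply]
  rw [fderiv_comp_const_add']
  have h1 : ((scle s hR : (Fin d → ℝ) →L[ℝ] (Fin d → ℝ))) (Pi.single j 1) =
      (R ^ s j : ℝ) • (Pi.single j 1 : Fin d → ℝ) := by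
    rw [ContinuousLinearEquiv.coe_coe, scle_apply, sclm_single]
  rw [h1, _root_.map_smul]
  have h2 : w + (scle s hR) y = smap s R w y := by rw [scle_apply, smap_apply_eq]
  rw [h2]
  simp [pderiv1, smul_eq_mul]

lemma pderiv1_const_mul {c : ℝ} (hc : c ≠ 0) (f : (Fin d → ℝ) → ℝ) (j : Fin d) :
    pderiv1 j (fun y => c * f y) = fun y => c * pderiv1 j f y := by
  funext y
  set e : ℝ ≃L[ℝ] ℝ := (LinearEquiv.smulOfNeZero ℝ ℝ c hc).toContinuousLinearEquiv with he
  have h0 : (fun y => c * f y) = (e : ℝ → ℝ) ∘ f := by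
    funext z; rfl
  rw [pderiv1, h0, ContinuousLinearEquiv.comp_fderiv]
  simp only [ContinuousLinearMap.coe_comp', Function.comp_apply]
  have : (e : ℝ →L[ℝ] ℝ) (fderiv ℝ f y (Pi.single j 1)) =
      c * fderiv ℝ f y (Pi.single j 1) := rfl
  rw [this]; rfl

lemma iterate_pderiv_scale (s : Fin d → ℕ) {R : ℝ} (hR : 0 < R) (w : Fin d → ℝ) (j : Fin d) :
    ∀ (n : ℕ) (c : ℝ), c ≠ 0 → ∀ f : (Fin d → ℝ) → ℝ,
      (pderiv1 j)^[n] (fun y => c * f (smap s R w y)) =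
        fun y => c * (R ^ s j) ^ n * (pderiv1 j)^[n] f (smap s R w y) := by
  intro n
  induction n with
  | zero => intro c hc f; funext y; simp
  | succ n ih =>
    intro c hc f
    rw [Function.iterate_succ_apply]
    have h1 : pderiv1 j (fun y => c * f (smap s R w y)) =
        fun y => (c * R ^ s j) * pderiv1 j f (smap s R w y) := by
      rw [pderiv1_const_mul hc (fun y => f (smap s R w y)) j, pderiv1_comp_smap s hR w f j]
      funext y; ring
    rw [h1, ih (c * R ^ s j) (by positivity) (pderiv1 j f)]
    funext y
    rw [← Function.iterate_succ_apply]
    ring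

lemma foldr_pderiv_scale (s : Fin d → ℕ) {R : ℝ} (hR : 0 < R) (w : Fin d → ℝ)
    (γ : Fin d → ℕ) :
    ∀ (l : List (Fin d)) (c : ℝ), c ≠ 0 → ∀ f : (Fin d → ℝ) → ℝ,
      List.foldr (fun j ψ => (pderiv1 j)^[γ j] ψ) (fun y => c * f (smap s R w y)) l
        = fun y => c * ((l.map fun j => (R ^ s j) ^ γ j).prod) *
            (List.foldr (fun j ψ => (pderiv1 j)^[γ j] ψ) f l) (smap s R w y) := by
  intro l
  induction l with
  | nil => intro c hc f; funext y; simp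
  | cons j l ih =>
    intro c hc f
    have hprod : 0 < ((l.map fun j => (R ^ s j) ^ γ j).prod) := by
      apply List.prod_pos
      intro b hb
      simp only [List.mem_map] at hb
      obtain ⟨i, -, rfl⟩ := hb
      positivity
    simp only [List.foldr_cons]
    rw [ih c hc f, iterate_pderiv_scale s hR w j (γ j)
      (c * ((l.map fun j => (R ^ s j) ^ γ j).prod)) (by positivity)]
    funext y
    simp only [List.map_cons, List.prod_cons]
    ring

lemma pderivM_scale (s : Fin d → ℕ) {R : ℝ} (hR : 0 < R) (w : Fin d → ℝ)
    (γ : Fin d → ℕ) {c : ℝ} (hc : c ≠ 0) (f : (Fin d → ℝ) → ℝ) :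
    pderivM γ (fun y => c * f (smap s R w y)) =
      fun y => c * R ^ (∑ i, s i * γ i) * pderivM γ f (smap s R w y) := by
  rw [pderivM, pderivM, foldr_pderiv_scale s hR w γ (List.finRange d) c hc f]
  have : (((List.finRange d).map fun j => (R ^ s j) ^ γ j).prod) = R ^ (∑ i, s i * γ i) := by
    rw [← Fin.prod_univ_def, ← Finset.prod_pow_eq_pow_sum]
    congr 1; funext i; rw [← pow_mul]
  rw [this]

lemma smap_one_zero (s : Fin d → ℕ) : smap s 1 (0 : Fin d → ℝ) = id := by
  funext y i; simp [smap]

lemma pderivM_const_mul (s : Fin d → ℕ) (γ : Fin d → ℕ) {c : ℝ} (hc : c ≠ 0)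
    (f : (Fin d → ℝ) → ℝ) :
    pderivM γ (fun y => c * f y) = fun y => c * pderivM γ f y := by
  have := pderivM_scale s (R := 1) one_pos (0 : Fin d → ℝ) γ hc f
  rw [smap_one_zero] at this
  simpa using this

/-- inverse of `smap` -/
def sinv (s : Fin d → ℕ) (R : ℝ) (w : Fin d → ℝ) (z : Fin d → ℝ) : Fin d → ℝ :=
  fun i => (R ^ s i)⁻¹ * (z i - w i)

lemma smap_sinv {s : Fin d → ℕ} {R : ℝ} (hR : 0 < R) (w z : Fin d → ℝ) :
    smap s R w (sinv s R w z) = z := by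
  funext i
  have : (R : ℝ) ^ s i ≠ 0 := by positivity
  simp only [smap, sinv]; rw [mul_inv_cancel_left₀ this]; ring

lemma sinv_smap {s : Fin d → ℕ} {R : ℝ} (hR : 0 < R) (w y : Fin d → ℝ) :
    sinv s R w (smap s R w y) = y := by
  funext i
  have : (R : ℝ) ^ s i ≠ 0 := by positivity
  simp only [smap, sinv]; rw [add_sub_cancel_left, inv_mul_cancel_left₀ this]

lemma smap_surjective {s : Fin d → ℕ} {R : ℝ} (hR : 0 < R) (w : Fin d → ℝ) :
    Function.Surjective (smap s R w) :=
  fun z => ⟨sinv s R w z, smap_sinv hR w z⟩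

lemma smap_injective {s : Fin d → ℕ} {R : ℝ} (hR : 0 < R) (w : Fin d → ℝ) :
    Function.Injective (smap s R w) := by
  intro y y' h
  have := congrArg (sinv s R w) h
  rwa [sinv_smap hR, sinv_smap hR] at this

lemma adist_smap {s : Fin d → ℕ} (hs : ∀ i, 0 < s i) {R : ℝ} (hR : 0 < R)
    (w x y : Fin d → ℝ) :
    adist s (smap s R w x) (smap s R w y) = R * adist s x y := by
  rw [adist, adist, Finset.mul_sum]
  apply Finset.sum_congr rfl
  intro i _
  have h1 : smap s R w x i - smap s R w y i = R ^ s i * (x i - y i) := by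
    simp [smap]; ring
  rw [h1, abs_mul, abs_of_pos (by positivity : (0:ℝ) < R ^ s i),
    Real.mul_rpow (by positivity) (abs_nonneg _)]
  congr 1
  rw [← Real.rpow_natCast R (s i), ← Real.rpow_mul hR.le]
  rw [mul_inv_cancel₀ (by exact_mod_cast (hs i).ne' : ((s i : ℝ)) ≠ 0), Real.rpow_one]

lemma aball_preimage {s : Fin d → ℕ} (hs : ∀ i, 0 < s i) {R : ℝ} (hR : 0 < R)
    (w x : Fin d → ℝ) (lam : ℝ) :
    smap s R w ⁻¹' (aball s (smap s R w x) (R * lam)) = aball s x lam := by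
  ext y
  simp only [Set.mem_preimage, aball, Set.mem_setOf_eq, adist_smap hs hR]
  exact mul_lt_mul_iff_right₀ hR

lemma aball_subset_iff {s : Fin d → ℕ} (hs : ∀ i, 0 < s i) {R : ℝ} (hR : 0 < R)
    (w x : Fin d → ℝ) (lam : ℝ) (D : Set (Fin d → ℝ)) :
    aball s x lam ⊆ smap s R w ⁻¹' D ↔ aball s (smap s R w x) (R * lam) ⊆ D := by
  constructor
  · intro h
    have h1 : aball s (smap s R w x) (R * lam) =
        smap s R w '' (smap s R w ⁻¹' (aball s (smap s R w x) (R * lam))) :=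
      (Set.image_preimage_eq _ (smap_surjective hR w)).symm
    rw [h1, aball_preimage hs hR]
    intro z hz
    obtain ⟨y, hy, rfl⟩ := hz
    exact h hy
  · intro h
    rw [← aball_preimage hs hR w x lam]
    exact Set.preimage_mono h

lemma tscale_smap {s : Fin d → ℕ} {R lam : ℝ} (hR : 0 < R) (hlam : 0 < lam)
    (φ : (Fin d → ℝ) → ℝ) (w x y : Fin d → ℝ) :
    tscale s φ (smap s R w x) (R * lam) (smap s R w y) =
      (R ^ (∑ i, s i))⁻¹ * tscale s φ x lam y := by
  rw [tscale, tscale]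
  have harg : (fun i => ((R * lam) ^ s i)⁻¹ * (smap s R w y i - smap s R w x i)) =
      (fun i => (lam ^ s i)⁻¹ * (y i - x i)) := by
    funext i
    have hR' : (R:ℝ) ^ s i ≠ 0 := by positivity
    have hl' : (lam:ℝ) ^ s i ≠ 0 := by positivity
    have h1 : smap s R w y i - smap s R w x i = R ^ s i * (y i - x i) := by
      simp [smap]; ring
    rw [h1, mul_pow]
    field_simp
  rw [harg, mul_pow]
  have hR2 : (R:ℝ) ^ (∑ i, s i) ≠ 0 := by positivity
  have hl2 : (lam:ℝ) ^ (∑ i, s i) ≠ 0 := by positivity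
  field_simp

lemma Lstar_smap {s : Fin d → ℕ} {R lam : ℝ} (hR : 0 < R) (hlam : 0 < lam)
    (m : ℕ) (a : (Fin d → ℕ) → ℂ) (φ : (Fin d → ℝ) → ℝ) (w x y : Fin d → ℝ) :
    Lstar s m a (tscale s φ (smap s R w x) (R * lam)) (smap s R w y) =
      ((((R ^ m)⁻¹ * (R ^ (∑ i, s i))⁻¹ : ℝ)) : ℂ) *
        Lstar s m a (tscale s φ x lam) y := by
  rw [Lstar, Lstar, Finset.mul_sum]
  apply Finset.sum_congr rfl
  intro γ hγ
  have hm : ∑ i, s i * γ i = m := (Finset.mem_filter.1 hγ).2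
  have hRm : (R:ℝ) ^ m ≠ 0 := by positivity
  have hRs : (R:ℝ) ^ (∑ i, s i) ≠ 0 := by positivity
  have key : pderivM γ (tscale s φ (smap s R w x) (R * lam)) (smap s R w y) =
      ((R ^ m)⁻¹ * (R ^ (∑ i, s i))⁻¹) * pderivM γ (tscale s φ x lam) y := by
    have e1 := pderivM_scale s hR w γ (c := (1:ℝ)) one_ne_zero
      (tscale s φ (smap s R w x) (R * lam))
    have e2 : (fun y => (1:ℝ) * tscale s φ (smap s R w x) (R * lam) (smap s R w y)) =
        (fun y => (R ^ (∑ i, s i))⁻¹ * tscale s φ x lam y) := by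
      funext z
      rw [one_mul, tscale_smap hR hlam]
    rw [e2] at e1
    have e3 := pderivM_const_mul s γ (c := ((R:ℝ) ^ (∑ i, s i))⁻¹)
      (inv_ne_zero hRs) (tscale s φ x lam)
    rw [e3] at e1
    have e4 := congrFun e1 y
    simp only [one_mul, hm] at e4
    field_simp at e4 ⊢
    linarith [e4]
  rw [key]
  push_cast
  ring


lemma smap_eq_fun (s : Fin d → ℕ) (R : ℝ) (w : Fin d → ℝ) :
    smap s R w = fun y => w + sclm s R y := funext (smap_apply_eq s R w)

lemma smap_continuous (s : Fin d → ℕ) (R : ℝ) (w : Fin d → ℝ) :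
    Continuous (smap s R w) := by
  rw [smap_eq_fun]
  exact continuous_const.add (sclm s R).continuous

lemma Lpair_smap {s : Fin d → ℕ} (hs : ∀ i, 0 < s i) {R lam : ℝ} (hR : 0 < R)
    (hlam : 0 < lam) (m : ℕ) (a : (Fin d → ℕ) → ℂ) {D : Set (Fin d → ℝ)} (hD : IsOpen D)
    (w x : Fin d → ℝ) (U : (Fin d → ℝ) → (Fin d → ℝ) → ℂ) (φ : (Fin d → ℝ) → ℝ) :
    Lpair s m a D (U (smap s R w x)) (tscale s φ (smap s R w x) (R * lam)) =
      (((R ^ m)⁻¹ : ℝ) : ℂ) *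
        Lpair s m a (smap s R w ⁻¹' D) (sgerm s R w U x) (tscale s φ x lam) := by
  have hmeas : MeasurableSet (smap s R w ⁻¹' D) :=
    (hD.preimage (smap_continuous s R w)).measurableSet
  have him : smap s R w '' (smap s R w ⁻¹' D) = D :=
    Set.image_preimage_eq D (smap_surjective hR w)
  have hfd : ∀ y ∈ smap s R w ⁻¹' D,
      HasFDerivWithinAt (smap s R w) (sclm s R) (smap s R w ⁻¹' D) y := by
    intro y _
    rw [smap_eq_fun]
    exact (((sclm s R).hasFDerivAt).const_add w).hasFDerivWithinAt
  have hinj : Set.InjOn (smap s R w) (smap s R w ⁻¹' D) :=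
    (smap_injective hR w).injOn
  conv_lhs => rw [Lpair, ← him,
    MeasureTheory.integral_image_eq_integral_abs_det_fderiv_smul volume hmeas hfd hinj]
  rw [Lpair, ← MeasureTheory.integral_const_mul]
  congr 1
  funext y
  rw [sclm_det, abs_of_pos (by positivity : (0:ℝ) < R ^ (∑ i, s i)),
    Lstar_smap hR hlam m a φ w x y]
  simp only [sgerm]
  rw [Complex.real_smul]
  have hRm : ((R:ℝ) ^ m : ℂ) ≠ 0 := by
    simp only [ne_eq, pow_eq_zero_iff', Complex.ofReal_eq_zero]
    push_cast
    intro h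
    exact absurd h.1 (by positivity)
  have hRs : ((R:ℝ) ^ (∑ i, s i) : ℂ) ≠ 0 := by
    push_cast
    simp only [ne_eq, pow_eq_zero_iff', Complex.ofReal_eq_zero]
    intro h
    exact absurd h.1 (by exact_mod_cast hR.ne')
  push_cast
  field_simp

lemma scaled_term_eq {s : Fin d → ℕ} (hs : ∀ i, 0 < s i) {R lam : ℝ} (hR : 0 < R)
    (hlam : 0 < lam) (m : ℕ) (a : (Fin d → ℕ) → ℂ) {D : Set (Fin d → ℝ)} (hD : IsOpen D)
    (γ' : ℝ) (w x : Fin d → ℝ) (U : (Fin d → ℝ) → (Fin d → ℝ) → ℂ)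
    (φ : (Fin d → ℝ) → ℝ) :
    lam ^ (-γ') * ‖Lpair s m a (smap s R w ⁻¹' D) (sgerm s R w U x) (tscale s φ x lam)‖ =
      R ^ (γ' + (m : ℝ)) * ((R * lam) ^ (-γ') * ‖Lpair s m a D (U (smap s R w x)) (tscale s φ (smap s R w x) (R * lam))‖) := by
  have hRm : (0:ℝ) < R ^ m := by positivity
  have habs : ‖Lpair s m a D (U (smap s R w x)) (tscale s φ (smap s R w x) (R * lam))‖ =
      (R ^ m)⁻¹ * ‖Lpair s m a (smap s R w ⁻¹' D) (sgerm s R w U x) (tscale s φ x lam)‖ := by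
    rw [Lpair_smap hs hR hlam m a hD w x U φ, norm_mul]
    congr 1
    rw [Complex.norm_real, Real.norm_eq_abs, abs_of_nonneg (by positivity)]
  rw [habs]
  set A := ‖Lpair s m a (smap s R w ⁻¹' D) (sgerm s R w U x) (tscale s φ x lam)‖ with hA
  have h1 : ((R * lam) : ℝ) ^ (-γ') = R ^ (-γ') * lam ^ (-γ') :=
    Real.mul_rpow hR.le hlam.le
  have h2 : R ^ (γ' + (m:ℝ)) = R ^ γ' * R ^ ((m:ℝ)) := Real.rpow_add hR _ _
  have h3 : R ^ ((m:ℝ)) = R ^ m := Real.rpow_natCast R m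
  have h4 : R ^ γ' * R ^ (-γ') = 1 := by
    rw [← Real.rpow_add hR]; simp
  rw [h1, h2, h3]
  have : R ^ γ' * R ^ m * (R ^ (-γ') * lam ^ (-γ') * ((R ^ m)⁻¹ * A)) =
      (R ^ γ' * R ^ (-γ')) * (R ^ m * (R ^ m)⁻¹) * (lam ^ (-γ') * A) := by ring
  rw [this, h4, mul_inv_cancel₀ hRm.ne']
  ring

end ScalingAux

/-- Scaling identity for the negative seminorm `[𝓛U]_{G^{γ'}}` under the
anisotropic rescaling `S^R_w`, for a constant-coefficient operator of anisotropic order `m`. -/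
theorem LnegSemi_smul_eq
    (d : ℕ) (hd : 1 ≤ d) (s : Fin d → ℕ) (hs : ∀ i, 0 < s i)
    (m : ℕ) (a : (Fin d → ℕ) → ℂ)
    (D : Set (Fin d → ℝ)) (hD : IsOpen D)
    (γ' : ℝ) (hγ' : γ' < 0) (R : ℝ) (hR : 0 < R) (w : Fin d → ℝ)
    (U : (Fin d → ℝ) → (Fin d → ℝ) → ℂ) (hU : IsGerm D U) :
    LnegSemi s m a (smap s R w ⁻¹' D) γ' (sgerm s R w U)
      = ENNReal.ofReal (R ^ (γ' + (m : ℝ))) * LnegSemi s m a D γ' U := by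
  have hRg : (0:ℝ) < R ^ (γ' + (m : ℝ)) := Real.rpow_pos_of_pos hR _
  set c := ENNReal.ofReal (R ^ (γ' + (m : ℝ))) with hc
  have key : ∀ (φ : TestB s ⌈-γ'⌉₊) (x : Fin d → ℝ) (lam : ℝ), 0 < lam →
      ENNReal.ofReal (lam ^ (-γ') * ‖Lpair s m a (smap s R w ⁻¹' D) (sgerm s R w U x) (tscale s φ.toFun x lam)‖) =
      c * ENNReal.ofReal ((R * lam) ^ (-γ') * ‖Lpair s m a D (U (smap s R w x))
          (tscale s φ.toFun (smap s R w x) (R * lam))‖) := by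
    intro φ x lam hlam
    rw [scaled_term_eq hs hR hlam m a hD γ' w x U φ.toFun,
      ENNReal.ofReal_mul hRg.le]
  apply le_antisymm
  · rw [LnegSemi]
    apply iSup_le; intro φ
    apply iSup_le; intro x
    apply iSup_le; intro lam
    rw [key φ x.1 lam.1 lam.2.1]
    apply mul_le_mul_right
    have hmem : smap s R w x.1 ∈ D := x.2
    have hball : aball s (smap s R w x.1) (R * lam.1) ⊆ D :=
      (aball_subset_iff hs hR w x.1 lam.1 D).1 lam.2.2
    rw [LnegSemi]
    refine le_iSup_of_le φ ?_
    refine le_iSup_of_le ⟨smap s R w x.1, hmem⟩ ?_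
    refine le_iSup_of_le ⟨R * lam.1, mul_pos hR lam.2.1, hball⟩ ?_
    exact le_rfl
  · rw [LnegSemi, LnegSemi, ENNReal.mul_iSup]
    apply iSup_le; intro φ
    rw [ENNReal.mul_iSup]
    apply iSup_le; intro x'
    rw [ENNReal.mul_iSup]
    apply iSup_le; intro lam'
    set x : Fin d → ℝ := sinv s R w x'.1 with hx
    set lam : ℝ := lam'.1 / R with hlamdef
    have hlam : 0 < lam := div_pos lam'.2.1 hR
    have hx' : smap s R w x = x'.1 := smap_sinv hR w x'.1
    have hlam' : R * lam = lam'.1 := by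
      rw [hlamdef]; field_simp
    have e1 : c * ENNReal.ofReal (lam'.1 ^ (-γ') * ‖Lpair s m a D (U x'.1) (tscale s φ.toFun x'.1 lam'.1)‖) =
        ENNReal.ofReal (lam ^ (-γ') * ‖Lpair s m a (smap s R w ⁻¹' D) (sgerm s R w U x)
            (tscale s φ.toFun x lam)‖) := by
      rw [key φ x lam hlam, hx', hlam']
    rw [e1]
    have hmem : x ∈ smap s R w ⁻¹' D := by
      simp only [Set.mem_preimage, hx']
      exact x'.2
    have hball : aball s x lam ⊆ smap s R w ⁻¹' D := by
      rw [aball_subset_iff hs hR w x lam D, hx', hlam']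
      exact lam'.2.2
    refine le_iSup_of_le φ ?_
    refine le_iSup_of_le ⟨x, hmem⟩ ?_
    refine le_iSup_of_le ⟨lam, hlam, hball⟩ ?_
    exact le_rfl

end GermSchauder
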